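/- arXiv:2011.09098 — 8 statements merged into one kernel-verified Lean document; each statement's English description precedes it below -/
import Mathlib

section
/- For all n, m, g ∈ ℕ, the cross-antenna cross-correlation of the LOS signal satisfies D_n[m,g] · conj(D_0[m,g]) = |α_0|² · exp(i n Ω_0). In particular, this quantity is independent of the packet index m, the subcarrier index g, the timing offset δ_τ(m), the carrier frequency offset δ_f(m), and the transmitted symbols x[m,g]. -/
lemma mc0 (z : ℂ) : z * (starRingEnd ℂ) z = (‖z‖ : ℂ)^2 := by
  rw [Complex.mul_conj, Complex.normSq_eq_norm_sq]; push_cast; ring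

lemma unit_exp (z : ℂ) (h : (starRingEnd ℂ) z = -z) :
    (starRingEnd ℂ) (Complex.exp z) * Complex.exp z = 1 := by
  rw [← Complex.exp_conj, h, ← Complex.exp_add]; simp

/-- The cross-antenna cross-correlation of the LOS signal satisfies
`D_n[m,g] · conj(D_0[m,g]) = |α_0|² · exp(i n Ω_0)`, independent of `m`, `g`, the
timing offsets, the carrier frequency offsets, and the transmitted symbols. -/
theorem cacc_los_term
    (L : ℕ) (α : ℕ → ℂ) (T_A T : ℝ) (hT_A : 0 < T_A) (hT : 0 < T)
    (f τ Ω : ℕ → ℝ) (δτ δf : ℕ → ℝ) (x : ℕ → ℕ → ℂ)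
    (hx : ∀ m g : ℕ, ‖x m g‖ = 1)
    (D I : ℕ → ℕ → ℕ → ℂ)
    (hD : ∀ n m g : ℕ, D n m g =
      α 0 * Complex.exp (Complex.I * n * Ω 0) *
      Complex.exp (Complex.I * (2 * Real.pi * m * T_A * δf m)) *
      Complex.exp (-Complex.I * (2 * Real.pi * g / T) * (τ 0 + δτ m)) * x m g)
    (hI : ∀ n m g : ℕ, I n m g =
      ∑ l ∈ Finset.Icc 1 L, α l * Complex.exp (Complex.I * n * Ω l) *
        Complex.exp (Complex.I * (2 * Real.pi * m * T_A * (f l + δf m))) *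
        Complex.exp (-Complex.I * (2 * Real.pi * g / T) * (τ l + δτ m)) * x m g) :
    ∀ n m g : ℕ, D n m g * (starRingEnd ℂ) (D 0 m g) =
      ((‖α 0‖ : ℂ)) ^ 2 * Complex.exp (Complex.I * n * Ω 0) := by
  intro n m g
  rw [hD, hD]
  simp only [map_mul, Nat.cast_zero, mul_zero, zero_mul, Complex.exp_zero, mul_one, map_one]
  have h1 := unit_exp (Complex.I * (2 * Real.pi * m * T_A * δf m)) (by
    simp only [map_mul, Complex.conj_I, Complex.conj_ofReal, map_ofNat,
      Complex.conj_natCast]; ring)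
  have h2 := unit_exp (-Complex.I * (2 * Real.pi * g / T) * (τ 0 + δτ m)) (by
    simp only [map_mul, map_add, map_neg, map_div₀, Complex.conj_I, Complex.conj_ofReal,
      map_ofNat, Complex.conj_natCast]; ring)
  have h3 := mc0 (x m g)
  rw [hx m g] at h3
  have h4 := mc0 (α 0)
  calc _ = (α 0 * (starRingEnd ℂ) (α 0)) * Complex.exp (Complex.I * n * Ω 0) *
      ((starRingEnd ℂ) (Complex.exp (Complex.I * (2 * Real.pi * m * T_A * δf m))) *
      Complex.exp (Complex.I * (2 * Real.pi * m * T_A * δf m))) *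
      ((starRingEnd ℂ) (Complex.exp (-Complex.I * (2 * Real.pi * g / T) * (τ 0 + δτ m))) *
      Complex.exp (-Complex.I * (2 * Real.pi * g / T) * (τ 0 + δτ m))) *
      (x m g * (starRingEnd ℂ) (x m g)) := by ring
  _ = _ := by rw [h1, h2, h3, h4]; push_cast; ring
end

section
/- For all n, m, g ∈ ℕ, the cross terms of the cross-antenna cross-correlation satisfy D_n[m,g] · conj(I_0[m,g]) + I_n[m,g] · conj(D_0[m,g]) = Σ_{l=1}^{L} α_0 · conj(α_l) · exp(−i 2π m T_A f_l) · exp(−i (2π g / T)(τ_0 − τ_l)) · exp(i n Ω_0) + Σ_{l=1}^{L} α_l · conj(α_0) · exp(i 2π m T_A f_l) · exp(−i (2π g / T)(τ_l − τ_0)) · exp(i n Ω_l). In particular, this expression is free of the timing offset δ_τ(m), the carrier frequency offset δ_f(m), and the symbols x[m,g], and contains only the actual Doppler frequencies f_l and relative delays τ_l − τ_0, each appearing together with its mirrored (sign-flipped) version. -/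
/-- The cross terms of the cross-antenna cross-correlation are free of
the timing/frequency offsets and symbols, and contain the actual Doppler frequencies
and relative delays together with their mirrored (sign-flipped) versions. -/
theorem cacc_cross_terms
    (L : ℕ) (α : ℕ → ℂ) (T_A T : ℝ) (hT_A : 0 < T_A) (hT : 0 < T)
    (f τ Ω : ℕ → ℝ) (δτ δf : ℕ → ℝ) (x : ℕ → ℕ → ℂ)
    (hx : ∀ m g : ℕ, ‖x m g‖ = 1)
    (D I : ℕ → ℕ → ℕ → ℂ)
    (hD : ∀ n m g : ℕ, D n m g =
      α 0 * Complex.exp (Complex.I * n * Ω 0) *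
      Complex.exp (Complex.I * (2 * Real.pi * m * T_A * δf m)) *
      Complex.exp (-Complex.I * (2 * Real.pi * g / T) * (τ 0 + δτ m)) * x m g)
    (hI : ∀ n m g : ℕ, I n m g =
      ∑ l ∈ Finset.Icc 1 L, α l * Complex.exp (Complex.I * n * Ω l) *
        Complex.exp (Complex.I * (2 * Real.pi * m * T_A * (f l + δf m))) *
        Complex.exp (-Complex.I * (2 * Real.pi * g / T) * (τ l + δτ m)) * x m g) :
    ∀ n m g : ℕ,
      D n m g * (starRingEnd ℂ) (I 0 m g) + I n m g * (starRingEnd ℂ) (D 0 m g) =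
      (∑ l ∈ Finset.Icc 1 L, α 0 * (starRingEnd ℂ) (α l) *
        Complex.exp (-Complex.I * (2 * Real.pi * m * T_A * f l)) *
        Complex.exp (-Complex.I * (2 * Real.pi * g / T) * (τ 0 - τ l)) *
        Complex.exp (Complex.I * n * Ω 0)) +
      (∑ l ∈ Finset.Icc 1 L, α l * (starRingEnd ℂ) (α 0) *
        Complex.exp (Complex.I * (2 * Real.pi * m * T_A * f l)) *
        Complex.exp (-Complex.I * (2 * Real.pi * g / T) * (τ l - τ 0)) *
        Complex.exp (Complex.I * n * Ω l)) := by
  intro n m g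
  have hx1 : x m g * (starRingEnd ℂ) (x m g) = 1 := by
    rw [Complex.mul_conj, Complex.normSq_eq_norm_sq, hx]
    norm_num
  have comb : ∀ (A B X Y u1 u2 u3 v1 v2 v3 a1 a2 a3 : ℂ), X * Y = 1 →
      u1 + u2 + u3 + v1 + v2 + v3 = a1 + a2 + a3 →
      A * Complex.exp u1 * Complex.exp u2 * Complex.exp u3 * X *
        (B * Complex.exp v1 * Complex.exp v2 * Complex.exp v3 * Y) =
      A * B * Complex.exp a1 * Complex.exp a2 * Complex.exp a3 := by
    intro A B X Y u1 u2 u3 v1 v2 v3 a1 a2 a3 hXY h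
    calc A * Complex.exp u1 * Complex.exp u2 * Complex.exp u3 * X *
        (B * Complex.exp v1 * Complex.exp v2 * Complex.exp v3 * Y)
        = A * B * (X * Y) * (Complex.exp u1 * Complex.exp u2 * Complex.exp u3 *
            Complex.exp v1 * Complex.exp v2 * Complex.exp v3) := by ring
      _ = A * B * Complex.exp a1 * Complex.exp a2 * Complex.exp a3 := by
          rw [hXY, mul_one, ← Complex.exp_add, ← Complex.exp_add, ← Complex.exp_add,
            ← Complex.exp_add, ← Complex.exp_add, h, Complex.exp_add, Complex.exp_add]
          ring
  rw [hD, hI, hI, hD, map_sum, Finset.mul_sum, Finset.sum_mul,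
    ← Finset.sum_add_distrib, ← Finset.sum_add_distrib]
  refine Finset.sum_congr rfl fun l hl => ?_
  simp only [map_mul, ← Complex.exp_conj, map_add, map_neg, Complex.conj_I,
    Complex.conj_ofReal, map_natCast, map_ofNat, map_div₀]
  congr 1
  · exact comb _ _ _ _ _ _ _ _ _ _ _ _ _ hx1 (by push_cast; ring)
  · exact comb _ _ _ _ _ _ _ _ _ _ _ _ _ hx1 (by push_cast; ring)
end

section
/- For all n, m, g ∈ ℕ, the NLOS auto-correlation term decomposes as I_n[m,g] · conj(I_0[m,g]) = Σ_{l=1}^{L} |α_l|² · exp(i n Ω_l) + Σ_{l=1}^{L} Σ_{x=1, x≠l}^{L} α_l · conj(α_x) · exp(i n Ω_l) · exp(i 2π m T_A (f_l − f_x)) · exp(−i (2π g / T)(τ_l − τ_x)), where the first sum is independent of m and g (a constant component) and the second sum depends on m and g only through the differences f_l − f_x and τ_l − τ_x; in particular the whole expression is free of the offsets δ_τ(m) and δ_f(m). -/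
/-- The NLOS auto-correlation term decomposes into a constant component
and a variant component depending only on the differences of the Doppler frequencies
and delays; in particular it is free of the offsets. -/
theorem cacc_nlos_autocorrelation
    (L : ℕ) (α : ℕ → ℂ) (T_A T : ℝ) (hT_A : 0 < T_A) (hT : 0 < T)
    (f τ Ω : ℕ → ℝ) (δτ δf : ℕ → ℝ) (x : ℕ → ℕ → ℂ)
    (hx : ∀ m g : ℕ, ‖x m g‖ = 1)
    (D I : ℕ → ℕ → ℕ → ℂ)
    (hD : ∀ n m g : ℕ, D n m g =
      α 0 * Complex.exp (Complex.I * n * Ω 0) *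
      Complex.exp (Complex.I * (2 * Real.pi * m * T_A * δf m)) *
      Complex.exp (-Complex.I * (2 * Real.pi * g / T) * (τ 0 + δτ m)) * x m g)
    (hI : ∀ n m g : ℕ, I n m g =
      ∑ l ∈ Finset.Icc 1 L, α l * Complex.exp (Complex.I * n * Ω l) *
        Complex.exp (Complex.I * (2 * Real.pi * m * T_A * (f l + δf m))) *
        Complex.exp (-Complex.I * (2 * Real.pi * g / T) * (τ l + δτ m)) * x m g) :
    ∀ n m g : ℕ,
      I n m g * (starRingEnd ℂ) (I 0 m g) =
      (∑ l ∈ Finset.Icc 1 L, (((‖α l‖ : ℝ) : ℂ)) ^ 2 *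
        Complex.exp (Complex.I * n * Ω l)) +
      (∑ l ∈ Finset.Icc 1 L, ∑ x' ∈ (Finset.Icc 1 L).erase l,
        α l * (starRingEnd ℂ) (α x') * Complex.exp (Complex.I * n * Ω l) *
        Complex.exp (Complex.I * (2 * Real.pi * m * T_A * (f l - f x'))) *
        Complex.exp (-Complex.I * (2 * Real.pi * g / T) * (τ l - τ x'))) := by
  intro n m g
  have hx1 : x m g * (starRingEnd ℂ) (x m g) = 1 := by
    rw [Complex.mul_conj, Complex.normSq_eq_norm_sq, hx m g]; norm_num
  have key : I n m g * (starRingEnd ℂ) (I 0 m g) =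
      ∑ l ∈ Finset.Icc 1 L, ∑ x' ∈ Finset.Icc 1 L,
        α l * (starRingEnd ℂ) (α x') * Complex.exp (Complex.I * n * Ω l) *
        Complex.exp (Complex.I * (2 * Real.pi * m * T_A * (f l - f x'))) *
        Complex.exp (-Complex.I * (2 * Real.pi * g / T) * (τ l - τ x')) := by
    rw [hI, hI, map_sum, Finset.sum_mul_sum]
    refine Finset.sum_congr rfl (fun l _ => Finset.sum_congr rfl (fun x' _ => ?_))
    simp only [map_mul, ← Complex.exp_conj, map_add, map_sub, map_neg, map_div₀,
      Complex.conj_I, Complex.conj_ofReal, map_ofNat, map_natCast]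
    rw [show ∀ a b e1 e2 e3 d1 d2 d3 y z : ℂ,
        a * e1 * e2 * e3 * y * (b * d1 * d2 * d3 * z)
        = a * b * (e1 * d1) * (e2 * d2) * (e3 * d3) * (y * z) from by intros; ring,
      hx1, mul_one, ← Complex.exp_add, ← Complex.exp_add, ← Complex.exp_add]
    congr 2 <;> push_cast <;> ring
  rw [key]
  rw [← Finset.sum_add_distrib]
  refine Finset.sum_congr rfl (fun l hl => ?_)
  rw [← Finset.add_sum_erase _ _ hl]
  congr 1
  rw [Complex.mul_conj, Complex.normSq_eq_norm_sq, sub_self, sub_self]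
  push_cast
  simp
end

section
/- (Theorem 1, time-domain part.) Every mirrored signal vector p_n[m,g], for all n, m, g ∈ ℕ, lies in the ℂ-linear span of the L vectors {p_0(φ_1),…,p_0(φ_L)} in ℂ^{P+1}. Consequently, for any fixed n_0, g_0 ∈ ℕ and any M > P, the (P+1) × (M−P) complex matrix P whose j-th column (j = 0,…,M−P−1) is p_{n_0}[j, g_0] has rank at most L. -/
/-- The mirrored basis vector `p_m(f) ∈ ℂ^{P+1}`, with `k`-th entry
`exp(i(m+k)f) + exp(i(m+P−k)f)`. -/
noncomputable def pvec (P m : ℕ) (f : ℝ) : Fin (P + 1) → ℂ := fun k =>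
  Complex.exp (Complex.I * ((m + (k : ℕ) : ℕ) : ℂ) * (f : ℂ)) +
  Complex.exp (Complex.I * ((m + P - (k : ℕ) : ℕ) : ℂ) * (f : ℂ))

/-- The mirrored basis vector `q_g(τ) ∈ ℂ^{Q+1}`, with `k`-th entry
`exp(−i(g+k)τ) + exp(−i(g+Q−k)τ)`. -/
noncomputable def qvec (Q g : ℕ) (τ : ℝ) : Fin (Q + 1) → ℂ := fun k =>
  Complex.exp (-Complex.I * ((g + (k : ℕ) : ℕ) : ℂ) * (τ : ℂ)) +
  Complex.exp (-Complex.I * ((g + Q - (k : ℕ) : ℕ) : ℂ) * (τ : ℂ))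

/-- The noiseless CACC output `ξ_n[m,g]`. -/
noncomputable def xiSig (L : ℕ) (α : ℕ → ℂ) (φ ψ Ω : ℕ → ℝ) (n m g : ℕ) : ℂ :=
  ∑ l ∈ Finset.Icc 1 L,
    (α 0 * (starRingEnd ℂ) (α l) * Complex.exp (-Complex.I * (m : ℂ) * (φ l : ℂ)) *
        Complex.exp (Complex.I * (g : ℂ) * (ψ l : ℂ)) *
        Complex.exp (Complex.I * (n : ℂ) * (Ω 0 : ℂ)) +
      (starRingEnd ℂ) (α 0) * α l * Complex.exp (Complex.I * (m : ℂ) * (φ l : ℂ)) *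
        Complex.exp (-Complex.I * (g : ℂ) * (ψ l : ℂ)) *
        Complex.exp (Complex.I * (n : ℂ) * (Ω l : ℂ)))

/-- The mirrored (time-domain) signal vector `p_n[m,g] ∈ ℂ^{P+1}` with `k`-th entry
`ξ_n[m+k,g] + ξ_n[m+P−k,g]`. -/
noncomputable def pSig (P L : ℕ) (α : ℕ → ℂ) (φ ψ Ω : ℕ → ℝ) (n m g : ℕ) :
    Fin (P + 1) → ℂ := fun k =>
  xiSig L α φ ψ Ω n (m + (k : ℕ)) g + xiSig L α φ ψ Ω n (m + P - (k : ℕ)) g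

lemma exp_shift_neg (m P k : ℕ) (hk : k ≤ P) (f : ℝ) :
    Complex.exp (-Complex.I * ((m + k : ℕ) : ℂ) * (f : ℂ)) +
      Complex.exp (-Complex.I * ((m + P - k : ℕ) : ℂ) * (f : ℂ)) =
    Complex.exp (-Complex.I * ((m + P : ℕ) : ℂ) * (f : ℂ)) *
      (Complex.exp (Complex.I * ((k : ℕ) : ℂ) * (f : ℂ)) +
        Complex.exp (Complex.I * ((P - k : ℕ) : ℂ) * (f : ℂ))) := by
  have h1 : (((m + P - k : ℕ)) : ℂ) = (m : ℂ) + P - k := by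
    push_cast [Nat.cast_sub (le_trans hk (Nat.le_add_left _ _))]; ring
  have h2 : (((P - k : ℕ)) : ℂ) = (P : ℂ) - k := by push_cast [Nat.cast_sub hk]; ring
  rw [h1, h2, mul_add, ← Complex.exp_add, ← Complex.exp_add]
  rw [show -Complex.I * ((m + k : ℕ) : ℂ) * f =
      -Complex.I * ((m + P : ℕ) : ℂ) * f + Complex.I * ((P : ℂ) - k) * f by push_cast; ring,
    show -Complex.I * ((m : ℂ) + P - k) * f =
      -Complex.I * ((m + P : ℕ) : ℂ) * f + Complex.I * (k : ℂ) * f by push_cast; ring]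
  ring

lemma exp_shift_pos (m P k : ℕ) (hk : k ≤ P) (f : ℝ) :
    Complex.exp (Complex.I * ((m + k : ℕ) : ℂ) * (f : ℂ)) +
      Complex.exp (Complex.I * ((m + P - k : ℕ) : ℂ) * (f : ℂ)) =
    Complex.exp (Complex.I * ((m : ℕ) : ℂ) * (f : ℂ)) *
      (Complex.exp (Complex.I * ((k : ℕ) : ℂ) * (f : ℂ)) +
        Complex.exp (Complex.I * ((P - k : ℕ) : ℂ) * (f : ℂ))) := by
  have h1 : (((m + P - k : ℕ)) : ℂ) = (m : ℂ) + P - k := by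
    push_cast [Nat.cast_sub (le_trans hk (Nat.le_add_left _ _))]; ring
  have h2 : (((P - k : ℕ)) : ℂ) = (P : ℂ) - k := by push_cast [Nat.cast_sub hk]; ring
  rw [h1, h2, mul_add, ← Complex.exp_add, ← Complex.exp_add]
  rw [show Complex.I * ((m + k : ℕ) : ℂ) * f =
      Complex.I * ((m : ℕ) : ℂ) * f + Complex.I * (k : ℂ) * f by push_cast; ring,
    show Complex.I * ((m : ℂ) + P - k) * f =
      Complex.I * ((m : ℕ) : ℂ) * f + Complex.I * ((P : ℂ) - k) * f by push_cast; ring]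

lemma pSig_rep (P L : ℕ) (α : ℕ → ℂ) (φ ψ Ω : ℕ → ℝ) (n m g : ℕ) :
    pSig P L α φ ψ Ω n m g =
      ∑ l ∈ Finset.Icc 1 L,
        (α 0 * (starRingEnd ℂ) (α l) * Complex.exp (Complex.I * (g : ℂ) * (ψ l : ℂ)) *
            Complex.exp (Complex.I * (n : ℂ) * (Ω 0 : ℂ)) *
            Complex.exp (-Complex.I * ((m + P : ℕ) : ℂ) * (φ l : ℂ)) +
          (starRingEnd ℂ) (α 0) * α l * Complex.exp (-Complex.I * (g : ℂ) * (ψ l : ℂ)) *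
            Complex.exp (Complex.I * (n : ℂ) * (Ω l : ℂ)) *
            Complex.exp (Complex.I * ((m : ℕ) : ℂ) * (φ l : ℂ))) • pvec P 0 (φ l) := by
  funext k
  have hk : (k : ℕ) ≤ P := Nat.lt_succ_iff.mp k.isLt
  simp only [pSig, xiSig, pvec, Finset.sum_apply, Pi.smul_apply, smul_eq_mul,
    ← Finset.sum_add_distrib, Nat.zero_add, zero_add]
  apply Finset.sum_congr rfl
  intro l _
  have h1 := exp_shift_neg m P (k : ℕ) hk (φ l)
  have h2 := exp_shift_pos m P (k : ℕ) hk (φ l)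
  linear_combination
    (α 0 * (starRingEnd ℂ) (α l) * Complex.exp (Complex.I * (g : ℂ) * (ψ l : ℂ)) *
      Complex.exp (Complex.I * (n : ℂ) * (Ω 0 : ℂ))) * h1 +
    ((starRingEnd ℂ) (α 0) * α l * Complex.exp (-Complex.I * (g : ℂ) * (ψ l : ℂ)) *
      Complex.exp (Complex.I * (n : ℂ) * (Ω l : ℂ))) * h2

/-- Theorem 1, time-domain part: every mirrored signal vector
`p_n[m,g]` lies in the span of the `L` vectors `{p_0(φ_1),…,p_0(φ_L)}`; consequently
the `(P+1) × (M−P)` matrix whose `j`-th column is `p_{n_0}[j,g_0]` has rank at most `L`. -/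
theorem pSig_span_and_rank (P L : ℕ) (α : ℕ → ℂ) (φ ψ Ω : ℕ → ℝ) :
    (∀ n m g : ℕ, pSig P L α φ ψ Ω n m g ∈
      Submodule.span ℂ ((fun l : ℕ => pvec P 0 (φ l)) '' ↑(Finset.Icc 1 L))) ∧
    (∀ n₀ g₀ M : ℕ, P < M →
      Matrix.rank (Matrix.of fun (k : Fin (P + 1)) (j : Fin (M - P)) =>
        pSig P L α φ ψ Ω n₀ (j : ℕ) g₀ k) ≤ L) := by
  have hspan : ∀ n m g : ℕ, pSig P L α φ ψ Ω n m g ∈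
      Submodule.span ℂ ((fun l : ℕ => pvec P 0 (φ l)) '' ↑(Finset.Icc 1 L)) := by
    intro n m g
    rw [pSig_rep]
    refine Submodule.sum_mem _ fun l hl => Submodule.smul_mem _ _ ?_
    exact Submodule.subset_span ⟨l, hl, rfl⟩
  refine ⟨hspan, fun n₀ g₀ M _ => ?_⟩
  set A : Matrix (Fin (P + 1)) (Fin (M - P)) ℂ :=
    Matrix.of fun (k : Fin (P + 1)) (j : Fin (M - P)) => pSig P L α φ ψ Ω n₀ (j : ℕ) g₀ k
  have hcol : LinearMap.range A.mulVecLin ≤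
      Submodule.span ℂ ((fun l : ℕ => pvec P 0 (φ l)) '' ↑(Finset.Icc 1 L)) := by
    rw [Matrix.range_mulVecLin, Submodule.span_le]
    rintro _ ⟨j, rfl⟩
    exact hspan n₀ (j : ℕ) g₀
  calc Matrix.rank A = Module.finrank ℂ (LinearMap.range A.mulVecLin) := rfl
    _ ≤ Module.finrank ℂ (Submodule.span ℂ
          ((fun l : ℕ => pvec P 0 (φ l)) '' ↑(Finset.Icc 1 L))) :=
        Submodule.finrank_mono hcol
    _ ≤ L := by
        rw [← Finset.coe_image]
        refine le_trans (finrank_span_finset_le_card _) ?_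
        refine le_trans Finset.card_image_le ?_
        simp [Nat.card_Icc]
end

section
/- (Theorem 1, frequency-domain part.) Every mirrored signal vector q_n[m,g], for all n, m, g ∈ ℕ, lies in the ℂ-linear span of the L vectors {q_0(ψ_1),…,q_0(ψ_L)} in ℂ^{Q+1}. Consequently, for any fixed n_0, m_0 ∈ ℕ and any G > Q, the (Q+1) × (G−Q) complex matrix Q whose j-th column (j = 0,…,G−Q−1) is q_{n_0}[m_0, j] has rank at most L. -/
/-- The mirrored (frequency-domain) signal vector `q_n[m,g] ∈ ℂ^{Q+1}` with `k`-th entry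
`ξ_n[m,g+k] + ξ_n[m,g+Q−k]`. -/
noncomputable def qSig (Q L : ℕ) (α : ℕ → ℂ) (φ ψ Ω : ℕ → ℝ) (n m g : ℕ) :
    Fin (Q + 1) → ℂ := fun k =>
  xiSig L α φ ψ Ω n m (g + (k : ℕ)) + xiSig L α φ ψ Ω n m (g + Q - (k : ℕ))


lemma expand' (g Q k ψ A B : ℂ) :
    A * Complex.exp (Complex.I*(g+k)*ψ) + B * Complex.exp (-Complex.I*(g+k)*ψ) +
    (A * Complex.exp (Complex.I*(g+Q-k)*ψ) + B * Complex.exp (-Complex.I*(g+Q-k)*ψ))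
    = (A * Complex.exp (Complex.I*(g+Q)*ψ) + B * Complex.exp (-Complex.I*g*ψ)) *
      (Complex.exp (-Complex.I*k*ψ) + Complex.exp (-Complex.I*(Q-k)*ψ)) := by
  have h : ∀ x y : ℂ, Complex.exp x * Complex.exp y = Complex.exp (x+y) :=
    fun x y => (Complex.exp_add x y).symm
  simp only [mul_add, add_mul, mul_assoc, h]
  ring_nf

lemma qSig_rep (Q L : ℕ) (α : ℕ → ℂ) (φ ψ Ω : ℕ → ℝ) (n m g : ℕ) :
    qSig Q L α φ ψ Ω n m g =
    ∑ l ∈ Finset.Icc 1 L,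
      (α 0 * (starRingEnd ℂ) (α l) * Complex.exp (-Complex.I * (m : ℂ) * (φ l : ℂ)) *
          Complex.exp (Complex.I * (n : ℂ) * (Ω 0 : ℂ)) *
          Complex.exp (Complex.I * ((g : ℂ) + (Q : ℂ)) * (ψ l : ℂ)) +
        (starRingEnd ℂ) (α 0) * α l * Complex.exp (Complex.I * (m : ℂ) * (φ l : ℂ)) *
          Complex.exp (Complex.I * (n : ℂ) * (Ω l : ℂ)) *
          Complex.exp (-Complex.I * (g : ℂ) * (ψ l : ℂ))) • qvec Q 0 (ψ l) := by
  funext k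
  have hk : (k : ℕ) ≤ Q := Nat.lt_succ_iff.mp k.isLt
  have h1 : ((g + Q - (k : ℕ) : ℕ) : ℂ) = (g : ℂ) + (Q : ℂ) - ((k : ℕ) : ℂ) := by
    rw [Nat.cast_sub (by omega : (k : ℕ) ≤ g + Q), Nat.cast_add]
  have h2 : ((0 + Q - (k : ℕ) : ℕ) : ℂ) = (Q : ℂ) - ((k : ℕ) : ℂ) := by
    rw [Nat.zero_add, Nat.cast_sub hk]
  have h3 : ((g + (k : ℕ) : ℕ) : ℂ) = (g : ℂ) + ((k : ℕ) : ℂ) := by push_cast; ring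
  have h4 : ((0 + (k : ℕ) : ℕ) : ℂ) = ((k : ℕ) : ℂ) := by push_cast; ring
  simp only [qSig, xiSig, qvec, Finset.sum_apply, Pi.smul_apply, smul_eq_mul,
    ← Finset.sum_add_distrib, h1, h2, h3, h4]
  refine Finset.sum_congr rfl fun l _ => ?_
  linear_combination expand' (g : ℂ) (Q : ℂ) ((k : ℕ) : ℂ) ((ψ l : ℝ) : ℂ)
    (α 0 * (starRingEnd ℂ) (α l) * Complex.exp (-Complex.I * (m : ℂ) * (φ l : ℂ)) *
      Complex.exp (Complex.I * (n : ℂ) * (Ω 0 : ℂ)))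
    ((starRingEnd ℂ) (α 0) * α l * Complex.exp (Complex.I * (m : ℂ) * (φ l : ℂ)) *
      Complex.exp (Complex.I * (n : ℂ) * (Ω l : ℂ)))

/-- Theorem 1, frequency-domain part: every mirrored signal vector
`q_n[m,g]` lies in the span of the `L` vectors `{q_0(ψ_1),…,q_0(ψ_L)}`; consequently
the `(Q+1) × (G−Q)` matrix whose `j`-th column is `q_{n_0}[m_0,j]` has rank at most `L`. -/
theorem qSig_span_and_rank (Q L : ℕ) (α : ℕ → ℂ) (φ ψ Ω : ℕ → ℝ) :
    (∀ n m g : ℕ, qSig Q L α φ ψ Ω n m g ∈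
      Submodule.span ℂ ((fun l : ℕ => qvec Q 0 (ψ l)) '' ↑(Finset.Icc 1 L))) ∧
    (∀ n₀ m₀ G : ℕ, Q < G →
      Matrix.rank (Matrix.of fun (k : Fin (Q + 1)) (j : Fin (G - Q)) =>
        qSig Q L α φ ψ Ω n₀ m₀ (j : ℕ) k) ≤ L) := by
  have hspan : ∀ n m g : ℕ, qSig Q L α φ ψ Ω n m g ∈
      Submodule.span ℂ ((fun l : ℕ => qvec Q 0 (ψ l)) '' ↑(Finset.Icc 1 L)) := by
    intro n m g
    rw [qSig_rep]
    refine Submodule.sum_mem _ fun l hl => Submodule.smul_mem _ _ ?_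
    exact Submodule.subset_span ⟨l, hl, rfl⟩
  refine ⟨hspan, fun n₀ m₀ G hG => ?_⟩
  classical
  set M : Matrix (Fin (Q+1)) (Fin (G-Q)) ℂ :=
    Matrix.of fun (k : Fin (Q + 1)) (j : Fin (G - Q)) => qSig Q L α φ ψ Ω n₀ m₀ (j : ℕ) k
  set T : Finset (Fin (Q+1) → ℂ) := (Finset.Icc 1 L).image fun l => qvec Q 0 (ψ l)
  have hT : (T : Set (Fin (Q+1) → ℂ)) = (fun l : ℕ => qvec Q 0 (ψ l)) '' ↑(Finset.Icc 1 L) :=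
    Finset.coe_image
  have hle : LinearMap.range M.mulVecLin ≤ Submodule.span ℂ (T : Set (Fin (Q+1) → ℂ)) := by
    rw [Matrix.range_mulVecLin, Submodule.span_le]
    rintro _ ⟨j, rfl⟩
    have : M.col j = qSig Q L α φ ψ Ω n₀ m₀ (j : ℕ) := rfl
    rw [this, hT]
    exact hspan n₀ m₀ j
  calc Matrix.rank M = Module.finrank ℂ (LinearMap.range M.mulVecLin) := rfl
    _ ≤ Module.finrank ℂ (Submodule.span ℂ (T : Set (Fin (Q+1) → ℂ))) :=
        Submodule.finrank_mono hle
    _ ≤ T.card := finrank_span_finset_le_card T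
    _ ≤ (Finset.Icc 1 L).card := Finset.card_image_le
    _ = L := by simp
end

section
/- (Linear independence of the mirrored basis, making precise the claim that the ranges of P guarantee L linearly independent mirrored basis vectors.) Suppose P = 2R is even and f_1,…,f_L ∈ (0, π) are pairwise distinct with L ≤ R + 1. Then the mirrored basis vectors p_0(f_1),…,p_0(f_L) are linearly independent over ℂ in ℂ^{P+1}; in particular, the ℂ-linear span of the family {p_m(ε f_l) : m ∈ ℕ, ε ∈ {+1,−1}, l ∈ {1,…,L}} has dimension exactly L. -/
open Polynomial Polynomial.Chebyshev

noncomputable def cvec (R : ℕ) (f : ℝ) : Fin (2*R+1) → ℂ :=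
  fun k => 2 * Complex.cos ((((k : ℕ) : ℂ) - (R : ℂ)) * (f : ℂ))

lemma T_aux : ∀ n : ℕ, (T ℂ n).natDegree ≤ n ∧ (T ℂ n).coeff n = 2^(n-1) := by
  intro n
  induction n using Nat.strong_induction_on with
  | _ n ih =>
    match n with
    | 0 => simp [T_zero]
    | 1 => simp [T_one]
    | (n+2) =>
      have h1 := ih (n+1) (by omega)
      have h0 := ih n (by omega)
      have hrec : T ℂ ((n+2 : ℕ) : ℤ) = 2 * X * T ℂ ((n+1 : ℕ) : ℤ) - T ℂ (n : ℤ) := by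
        push_cast
        exact T_add_two ℂ n
      constructor
      · rw [hrec]
        refine le_trans (natDegree_sub_le _ _) (max_le ?_ (le_trans h0.1 (by omega)))
        refine le_trans (natDegree_mul_le) ?_
        have : ((2 : ℂ[X]) * X).natDegree ≤ 1 :=
          le_trans natDegree_mul_le (by simp)
        omega
      · rw [hrec]
        have h2 : (2 * X * T ℂ ((n+1 : ℕ) : ℤ)).coeff (n+2) = 2 * (T ℂ ((n+1:ℕ):ℤ)).coeff (n+1) := by
          rw [show (2 : ℂ[X]) * X * T ℂ ((n+1 : ℕ) : ℤ) = C 2 * (X * T ℂ ((n+1 : ℕ) : ℤ)) by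
            rw [← mul_assoc]; congr 1]
          rw [coeff_C_mul, coeff_X_mul]
        have h3 : (T ℂ (n : ℤ)).coeff (n+2) = 0 :=
          coeff_eq_zero_of_natDegree_lt (by omega)
        rw [coeff_sub, h2, h3, h1.2]
        rw [show n+1-1 = n by omega, show n+2-1 = n+1 by omega]
        ring

lemma mem_spanT (R : ℕ) (q : ℂ[X]) (hq : q.natDegree ≤ R) :
    q ∈ Submodule.span ℂ (Set.range fun j : Fin (R+1) => T ℂ ((j : ℕ) : ℤ)) := by
  suffices H : ∀ n, ∀ q : ℂ[X], q.natDegree ≤ n → n ≤ R →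
      q ∈ Submodule.span ℂ (Set.range fun j : Fin (R+1) => T ℂ ((j : ℕ) : ℤ)) from
    H R q hq le_rfl
  intro n
  induction n using Nat.strong_induction_on with
  | _ n ih =>
    intro q hqn hnR
    by_cases hq0 : q = 0
    · simp [hq0]
    set d := q.natDegree with hd
    set c : ℂ := q.coeff d / 2^(d-1) with hc
    set r : ℂ[X] := q - c • T ℂ (d : ℤ) with hr
    have hTd := T_aux d
    have hpow : (2:ℂ)^(d-1) ≠ 0 := pow_ne_zero _ two_ne_zero
    have hrd : r.coeff d = 0 := by
      simp only [hr, coeff_sub, coeff_smul, hTd.2, smul_eq_mul, hc]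
      field_simp
      simp
    have hrdeg : r.natDegree ≤ d := by
      refine le_trans (natDegree_sub_le _ _) (max_le le_rfl ?_)
      exact le_trans (natDegree_smul_le _ _) hTd.1
    have hTmem : T ℂ (d : ℤ) ∈ Submodule.span ℂ (Set.range fun j : Fin (R+1) => T ℂ ((j : ℕ) : ℤ)) :=
      Submodule.subset_span ⟨⟨d, by omega⟩, rfl⟩
    have hq_eq : q = r + c • T ℂ (d : ℤ) := by rw [hr]; ring
    by_cases hr0 : r = 0
    · rw [hq_eq, hr0, zero_add]
      exact Submodule.smul_mem _ _ hTmem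
    · have hlt : r.natDegree < d := by
        rcases lt_or_eq_of_le hrdeg with h | h
        · exact h
        · exact absurd (leadingCoeff_eq_zero.mp (by rw [leadingCoeff, h]; exact hrd)) hr0
      have hd_pos : d ≤ n := hqn
      have := ih r.natDegree (lt_of_lt_of_le hlt hd_pos) r le_rfl (by omega)
      rw [hq_eq]
      exact Submodule.add_mem _ this (Submodule.smul_mem _ _ hTmem)

lemma cvec_neg (R : ℕ) (f : ℝ) : cvec R (-f) = cvec R f := by
  funext k
  simp only [cvec, Complex.ofReal_neg]
  rw [show (((k : ℕ) : ℂ) - (R:ℂ)) * (-(f:ℂ)) = -((((k : ℕ) : ℂ) - (R:ℂ)) * (f:ℂ)) by ring,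
    Complex.cos_neg]

lemma pvec_eq (R m : ℕ) (f : ℝ) :
    pvec (2*R) m f = Complex.exp (Complex.I * ((m:ℂ) + (R:ℂ)) * (f:ℂ)) • cvec R f := by
  funext k
  have hk : (k : ℕ) ≤ m + 2*R := by omega
  simp only [pvec, cvec, Pi.smul_apply, smul_eq_mul]
  rw [show (2 : ℂ) * Complex.cos ((((k : ℕ) : ℂ) - (R:ℂ)) * (f:ℂ))
      = Complex.exp (((((k : ℕ) : ℂ) - (R:ℂ)) * (f:ℂ)) * Complex.I)
      + Complex.exp (-((((k : ℕ) : ℂ) - (R:ℂ)) * (f:ℂ)) * Complex.I) from Complex.two_cos _]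
  rw [mul_add, ← Complex.exp_add, ← Complex.exp_add]
  push_cast [Nat.cast_sub hk]
  ring_nf

lemma cvec_li (R L : ℕ) (f : Fin L → ℝ)
    (hf : ∀ l : Fin L, f l ∈ Set.Ioo 0 Real.pi)
    (hinj : Function.Injective f) (hL : L ≤ R + 1) :
    LinearIndependent ℂ (fun l : Fin L => cvec R (f l)) := by
  rw [Fintype.linearIndependent_iff]
  intro g hg l0
  set x : Fin L → ℂ := fun l => Complex.cos ((f l : ℂ)) with hx
  have hxinj : Function.Injective x := by
    intro a b hab
    apply hinj
    have hreal : Real.cos (f a) = Real.cos (f b) := by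
      have := hab
      simp only [hx, ← Complex.ofReal_cos, Complex.ofReal_inj] at this
      exact this
    exact Real.injOn_cos ⟨(hf a).1.le, (hf a).2.le⟩ ⟨(hf b).1.le, (hf b).2.le⟩ hreal
  have key : ∀ j : Fin (R+1), ∑ l, g l * eval (x l) (T ℂ ((j:ℕ):ℤ)) = 0 := by
    intro j
    have hk : (R + (j:ℕ)) < 2*R+1 := by omega
    have h1 := congrFun hg ⟨R + j, hk⟩
    simp only [Finset.sum_apply, Pi.smul_apply, cvec, smul_eq_mul, Pi.zero_apply] at h1
    have hcast : (((R + (j:ℕ) : ℕ)) : ℂ) - (R:ℂ) = ((j:ℕ):ℂ) := by push_cast; ring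
    rw [hcast] at h1
    have h2 : (2:ℂ) * ∑ l, g l * Complex.cos (((j:ℕ):ℂ) * (f l : ℂ)) = 0 := by
      rw [Finset.mul_sum, ← h1]
      exact Finset.sum_congr rfl (fun l _ => by ring)
    have h3 : ∑ l, g l * Complex.cos (((j:ℕ):ℂ) * (f l : ℂ)) = 0 :=
      (mul_eq_zero.mp h2).resolve_left two_ne_zero
    calc ∑ l, g l * eval (x l) (T ℂ ((j:ℕ):ℤ))
        = ∑ l, g l * Complex.cos (((j:ℕ):ℂ) * (f l : ℂ)) := by
          refine Finset.sum_congr rfl (fun l _ => ?_)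
          rw [hx, T_complex_cos]
          push_cast
          ring_nf
      _ = 0 := h3
  have hspan : ∀ q : ℂ[X], q.natDegree ≤ R → ∑ l, g l * eval (x l) q = 0 := by
    intro q hq
    refine Submodule.span_induction (p := fun q _ => ∑ l, g l * eval (x l) q = 0)
      ?_ ?_ ?_ ?_ (mem_spanT R q hq)
    · rintro _ ⟨j, rfl⟩; exact key j
    · simp
    · intro p r _ _ hp hr
      simp only [eval_add, mul_add, Finset.sum_add_distrib, hp, hr, add_zero]
    · intro a p _ hp
      simp only [eval_smul, smul_eq_mul]
      calc ∑ l, g l * (a * eval (x l) p) = a * ∑ l, g l * eval (x l) p := by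
            rw [Finset.mul_sum]; exact Finset.sum_congr rfl (fun l _ => by ring)
        _ = 0 := by rw [hp, mul_zero]
  have hxinj' : Set.InjOn x ↑(Finset.univ : Finset (Fin L)) := hxinj.injOn
  set q := Lagrange.basis Finset.univ x l0 with hq
  have hdeg : q.natDegree ≤ R := by
    rw [hq, Lagrange.natDegree_basis hxinj' (Finset.mem_univ _), Finset.card_univ,
      Fintype.card_fin]
    omega
  have hfin := hspan q hdeg
  rw [Finset.sum_eq_single l0 (fun l _ hl => by
      rw [hq, Lagrange.eval_basis_of_ne hl.symm (Finset.mem_univ _)]; ring)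
    (fun h => absurd (Finset.mem_univ l0) h)] at hfin
  rw [hq, Lagrange.eval_basis_self hxinj' (Finset.mem_univ _), mul_one] at hfin
  exact hfin

lemma pvec_eq' (R m : ℕ) (ε : ℝ) (hε : ε = 1 ∨ ε = -1) (f : ℝ) :
    ∃ e : ℂ, pvec (2*R) m (ε * f) = e • cvec R f := by
  rcases hε with h | h
  · exact ⟨_, by rw [h, one_mul, pvec_eq]⟩
  · exact ⟨_, by rw [h, show (-1 : ℝ) * f = -f by ring, pvec_eq, cvec_neg]⟩


/-- with `P = 2R` even and pairwise distinct `f_l ∈ (0, π)`, `L ≤ R+1`,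
the mirrored basis vectors `p_0(f_1),…,p_0(f_L)` are linearly independent, and the span
of the whole mirrored family has dimension exactly `L`. -/
theorem pvec_linear_independent (R L : ℕ) (f : Fin L → ℝ)
    (hf : ∀ l : Fin L, f l ∈ Set.Ioo 0 Real.pi)
    (hinj : Function.Injective f) (hL : L ≤ R + 1) :
    LinearIndependent ℂ (fun l : Fin L => pvec (2 * R) 0 (f l)) ∧
    Module.finrank ℂ (Submodule.span ℂ
      {v : Fin (2 * R + 1) → ℂ | ∃ (m : ℕ) (ε : ℝ) (l : Fin L),
        (ε = 1 ∨ ε = -1) ∧ v = pvec (2 * R) m (ε * f l)}) = L := by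
  have hcli := cvec_li R L f hf hinj hL
  set w : Fin L → ℂˣ := fun l =>
    Units.mk0 (Complex.exp (Complex.I * (((0:ℕ):ℂ) + (R:ℂ)) * ((f l : ℝ) : ℂ)))
      (Complex.exp_ne_zero _) with hw
  have hfam : (fun l : Fin L => pvec (2 * R) 0 (f l)) = w • (fun l => cvec R (f l)) := by
    funext l
    rw [pvec_eq R 0 (f l)]
    rfl
  constructor
  · rw [hfam]
    exact hcli.units_smul w
  · have hspan_eq : Submodule.span ℂ
        {v : Fin (2 * R + 1) → ℂ | ∃ (m : ℕ) (ε : ℝ) (l : Fin L),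
          (ε = 1 ∨ ε = -1) ∧ v = pvec (2 * R) m (ε * f l)}
        = Submodule.span ℂ (Set.range fun l : Fin L => cvec R (f l)) := by
      apply le_antisymm
      · rw [Submodule.span_le]
        rintro v ⟨m, ε, l, hε, rfl⟩
        obtain ⟨e, he⟩ := pvec_eq' R m ε hε (f l)
        rw [he]
        exact Submodule.smul_mem _ _ (Submodule.subset_span ⟨l, rfl⟩)
      · rw [Submodule.span_le]
        rintro v ⟨l, rfl⟩
        have hc : cvec R (f l)
            = (Complex.exp (Complex.I * (((0:ℕ):ℂ) + (R:ℂ)) * ((f l : ℝ) : ℂ)))⁻¹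
              • pvec (2 * R) 0 (f l) := by
          rw [pvec_eq R 0 (f l), smul_smul, inv_mul_cancel₀ (Complex.exp_ne_zero _), one_smul]
        show cvec R (f l) ∈ _
        rw [hc]
        refine Submodule.smul_mem _ _ (Submodule.subset_span ?_)
        exact ⟨0, 1, l, Or.inl rfl, by rw [one_mul]⟩
    rw [hspan_eq, finrank_span_eq_card hcli, Fintype.card_fin]
end

section
/- (Linear independence of the mirrored basis, making precise the claim that the ranges of Q guarantee L linearly independent mirrored basis vectors.) Suppose Q = 2R is even and τ_1,…,τ_L ∈ (0, π) are pairwise distinct with L ≤ R + 1. Then the mirrored basis vectors q_0(τ_1),…,q_0(τ_L) are linearly independent over ℂ in ℂ^{Q+1}; in particular, the ℂ-linear span of the family {q_g(ε τ_l) : g ∈ ℕ, ε ∈ {+1,−1}, l ∈ {1,…,L}} has dimension exactly L. -/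
open Complex Finset

lemma cos_mul_cos' (x y : ℂ) : Complex.cos x * Complex.cos y
    = (Complex.cos (x + y) + Complex.cos (x - y)) / 2 := by
  rw [Complex.cos_add, Complex.cos_sub]; ring

lemma powsum_zero {L R : ℕ} (x : Fin L → ℂ) (a : Fin L → ℂ)
    (hS : ∀ m : ℕ, m ≤ R → ∑ l, a l * Complex.cos ((m : ℂ) * x l) = 0) :
    ∀ n : ℕ, n ≤ R → ∑ l, a l * (Complex.cos (x l)) ^ n = 0 := by
  have key : ∀ n : ℕ, ∀ m : ℤ, n + m.natAbs ≤ R →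
      ∑ l, a l * (Complex.cos (x l)) ^ n * Complex.cos ((m : ℂ) * x l) = 0 := by
    intro n
    induction n with
    | zero =>
      intro m hm
      simp only [pow_zero, mul_one]
      rcases Int.natAbs_eq m with h | h
      · rw [show ((m : ℂ)) = ((m.natAbs : ℕ) : ℂ) by conv_lhs => rw [h, Int.cast_natCast]]
        exact hS m.natAbs (by omega)
      · have : ∀ l, Complex.cos ((m : ℂ) * x l)
            = Complex.cos (((m.natAbs : ℕ) : ℂ) * x l) := by
          intro l
          have : ((m : ℂ)) = -((m.natAbs : ℕ) : ℂ) := by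
            conv_lhs => rw [h, Int.cast_neg, Int.cast_natCast]
          rw [this, neg_mul, Complex.cos_neg]
        simp_rw [this]
        exact hS m.natAbs (by omega)
    | succ n ih =>
      intro m hm
      have h1 := ih (m + 1) (by have := Int.natAbs_add_le m 1; simp at this; omega)
      have h2 := ih (m - 1) (by have := Int.natAbs_sub_le m 1; simp at this; omega)
      have : ∀ l, a l * Complex.cos (x l) ^ (n + 1) * Complex.cos ((m : ℂ) * x l)
          = (a l * Complex.cos (x l) ^ n * Complex.cos (((m + 1 : ℤ) : ℂ) * x l)
            + a l * Complex.cos (x l) ^ n * Complex.cos (((m - 1 : ℤ) : ℂ) * x l)) / 2 := by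
        intro l
        have := cos_mul_cos' (x l) ((m : ℂ) * x l)
        have e1 : x l + (m : ℂ) * x l = ((m + 1 : ℤ) : ℂ) * x l := by push_cast; ring
        have e2 : x l - (m : ℂ) * x l = -(((m - 1 : ℤ) : ℂ) * x l) := by push_cast; ring
        rw [e1, e2, Complex.cos_neg] at this
        calc a l * Complex.cos (x l) ^ (n + 1) * Complex.cos ((m : ℂ) * x l)
            = a l * Complex.cos (x l) ^ n
              * (Complex.cos (x l) * Complex.cos ((m:ℂ) * x l)) := by ring
          _ = _ := by rw [this]; ring
      rw [Finset.sum_congr rfl fun l _ => this l, ← Finset.sum_div, Finset.sum_add_distrib,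
        h1, h2]
      norm_num
  intro n hn
  have := key n 0 (by simpa using hn)
  simpa using this

lemma vand_zero {L R : ℕ} (hL : L ≤ R + 1) (x : Fin L → ℂ) (hx : Function.Injective x)
    (a : Fin L → ℂ) (h : ∀ n : ℕ, n ≤ R → ∑ l, a l * x l ^ n = 0) : ∀ l, a l = 0 := by
  intro l0
  set p := Lagrange.basis Finset.univ x l0 with hp
  have hdeg : p.natDegree ≤ R := by
    rw [hp, Lagrange.natDegree_basis hx.injOn (Finset.mem_univ _)]
    simp only [Finset.card_univ, Fintype.card_fin]
    omega
  have heval : ∀ l, p.eval (x l) = ∑ n ∈ Finset.range (R + 1), p.coeff n * x l ^ n := by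
    intro l
    exact Polynomial.eval_eq_sum_range' (by omega) _
  have h1 : ∑ l, a l * p.eval (x l) = a l0 := by
    rw [Finset.sum_eq_single l0]
    · rw [hp, Lagrange.eval_basis_self hx.injOn (Finset.mem_univ _), mul_one]
    · intro l _ hl
      rw [hp, Lagrange.eval_basis_of_ne (Ne.symm hl) (Finset.mem_univ _), mul_zero]
    · simp
  have h2 : ∑ l, a l * p.eval (x l) = 0 := by
    simp_rw [heval, Finset.mul_sum]
    rw [Finset.sum_comm]
    refine Finset.sum_eq_zero fun n hn => ?_
    have := h n (by simp at hn; omega)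
    calc ∑ l, a l * (p.coeff n * x l ^ n) = p.coeff n * ∑ l, a l * x l ^ n := by
          rw [Finset.mul_sum]; congr 1; ext l; ring
      _ = 0 := by rw [this, mul_zero]
  rw [← h1, h2]

lemma qvec_g (Q g : ℕ) (σ : ℝ) :
    qvec Q g σ = Complex.exp (-Complex.I * (g : ℂ) * (σ : ℂ)) • qvec Q 0 σ := by
  funext k
  have hk : (k : ℕ) ≤ Q := Nat.lt_succ_iff.mp k.isLt
  simp only [qvec, Pi.smul_apply, smul_eq_mul]
  have t1 : Complex.exp (-Complex.I * ((g + (k:ℕ) : ℕ):ℂ) * (σ:ℂ))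
      = Complex.exp (-Complex.I * (g:ℂ) * (σ:ℂ))
        * Complex.exp (-Complex.I * ((0 + (k:ℕ) : ℕ):ℂ) * (σ:ℂ)) := by
    rw [← Complex.exp_add]; congr 1; push_cast; ring
  have t2 : Complex.exp (-Complex.I * ((g + Q - (k:ℕ) : ℕ):ℂ) * (σ:ℂ))
      = Complex.exp (-Complex.I * (g:ℂ) * (σ:ℂ))
        * Complex.exp (-Complex.I * ((0 + Q - (k:ℕ) : ℕ):ℂ) * (σ:ℂ)) := by
    rw [← Complex.exp_add]; congr 1
    have e1 : (g + Q - (k:ℕ) : ℕ) = g + (Q - (k:ℕ)) := by omega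
    have e2 : (0 + Q - (k:ℕ) : ℕ) = Q - (k:ℕ) := by omega
    rw [e1, e2]; push_cast [Nat.cast_sub hk]; ring
  rw [t1, t2]; ring

lemma qvec_neg (Q : ℕ) (σ : ℝ) :
    qvec Q 0 (-σ) = Complex.exp (Complex.I * (Q : ℂ) * (σ : ℂ)) • qvec Q 0 σ := by
  funext k
  have hk : (k : ℕ) ≤ Q := Nat.lt_succ_iff.mp k.isLt
  simp only [qvec, Pi.smul_apply, smul_eq_mul, Complex.ofReal_neg]
  have e2 : (0 + Q - (k:ℕ) : ℕ) = Q - (k:ℕ) := by omega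
  have e1 : (0 + (k:ℕ) : ℕ) = (k:ℕ) := by omega
  rw [e1, e2]
  have t1 : Complex.exp (-Complex.I * ((k:ℕ):ℂ) * (-(σ:ℂ)))
      = Complex.exp (Complex.I * (Q:ℂ) * (σ:ℂ))
        * Complex.exp (-Complex.I * (((Q - (k:ℕ) : ℕ)):ℂ) * (σ:ℂ)) := by
    rw [← Complex.exp_add]; congr 1; push_cast [Nat.cast_sub hk]; ring
  have t2 : Complex.exp (-Complex.I * (((Q - (k:ℕ) : ℕ)):ℂ) * (-(σ:ℂ)))
      = Complex.exp (Complex.I * (Q:ℂ) * (σ:ℂ))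
        * Complex.exp (-Complex.I * ((k:ℕ):ℂ) * (σ:ℂ)) := by
    rw [← Complex.exp_add]; congr 1; push_cast [Nat.cast_sub hk]; ring
  rw [t1, t2]; ring

/-- with `Q = 2R` even and pairwise distinct `τ_l ∈ (0, π)`, `L ≤ R+1`,
the mirrored basis vectors `q_0(τ_1),…,q_0(τ_L)` are linearly independent, and the span
of the whole mirrored family has dimension exactly `L`. -/
theorem qvec_linear_independent (R L : ℕ) (τ : Fin L → ℝ)
    (hτ : ∀ l : Fin L, τ l ∈ Set.Ioo 0 Real.pi)
    (hinj : Function.Injective τ) (hL : L ≤ R + 1) :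
    LinearIndependent ℂ (fun l : Fin L => qvec (2 * R) 0 (τ l)) ∧
    Module.finrank ℂ (Submodule.span ℂ
      {v : Fin (2 * R + 1) → ℂ | ∃ (g : ℕ) (ε : ℝ) (l : Fin L),
        (ε = 1 ∨ ε = -1) ∧ v = qvec (2 * R) g (ε * τ l)}) = L := by
  have hindep : LinearIndependent ℂ (fun l : Fin L => qvec (2 * R) 0 (τ l)) := by
    rw [Fintype.linearIndependent_iff]
    intro c hc l0
    set a : Fin L → ℂ := fun l => c l * Complex.exp (-Complex.I * (R:ℂ) * ((τ l : ℝ):ℂ))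
      with ha
    have hcos : ∀ m : ℕ, m ≤ R → ∑ l, a l * Complex.cos ((m:ℂ) * ((τ l : ℝ):ℂ)) = 0 := by
      intro m hm
      have hklt : R - m < 2 * R + 1 := by omega
      have hc' := congrFun hc ⟨R - m, hklt⟩
      simp only [Finset.sum_apply, Pi.smul_apply, Pi.zero_apply, smul_eq_mul] at hc'
      have hval : ∀ l : Fin L, qvec (2 * R) 0 (τ l) ⟨R - m, hklt⟩
          = Complex.exp (-Complex.I * (R:ℂ) * ((τ l : ℝ):ℂ))
            * (2 * Complex.cos ((m:ℂ) * ((τ l : ℝ):ℂ))) := by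
        intro l
        show Complex.exp (-Complex.I * ((0 + (R - m) : ℕ):ℂ) * _)
          + Complex.exp (-Complex.I * ((0 + 2 * R - (R - m) : ℕ):ℂ) * _) = _
        have e1 : (0 + (R - m) : ℕ) = R - m := by omega
        have e2 : (0 + 2 * R - (R - m) : ℕ) = R + m := by omega
        rw [e1, e2]
        have c1 : ((R - m : ℕ) : ℂ) = (R : ℂ) - (m : ℂ) := by
          push_cast [Nat.cast_sub hm]; ring
        have c2 : ((R + m : ℕ) : ℂ) = (R : ℂ) + (m : ℂ) := by push_cast; ring
        rw [c1, c2, Complex.cos,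
          show -Complex.I * ((R:ℂ) - (m:ℂ)) * ((τ l : ℝ):ℂ)
            = -Complex.I * (R:ℂ) * ((τ l : ℝ):ℂ) + ((m:ℂ) * ((τ l : ℝ):ℂ) * Complex.I) by ring,
          show -Complex.I * ((R:ℂ) + (m:ℂ)) * ((τ l : ℝ):ℂ)
            = -Complex.I * (R:ℂ) * ((τ l : ℝ):ℂ)
              + (-((m:ℂ) * ((τ l : ℝ):ℂ)) * Complex.I) by ring,
          Complex.exp_add, Complex.exp_add]
        ring
      have h2 : ∑ l, c l * qvec (2 * R) 0 (τ l) ⟨R - m, hklt⟩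
          = 2 * ∑ l, a l * Complex.cos ((m:ℂ) * ((τ l : ℝ):ℂ)) := by
        rw [Finset.mul_sum]
        refine Finset.sum_congr rfl fun l _ => ?_
        rw [hval l, ha]; ring
      rw [h2] at hc'
      have := mul_eq_zero.mp hc'
      rcases this with h | h
      · norm_num at h
      · exact h
    have hxinj : Function.Injective (fun l : Fin L => Complex.cos ((τ l : ℝ):ℂ)) := by
      intro l1 l2 h
      apply hinj
      have h' : Real.cos (τ l1) = Real.cos (τ l2) := by
        have := h
        simp only [← Complex.ofReal_cos] at this
        exact_mod_cast this
      exact Real.injOn_cos ⟨(hτ l1).1.le, (hτ l1).2.le⟩ ⟨(hτ l2).1.le, (hτ l2).2.le⟩ h'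
    have hpow := powsum_zero (fun l : Fin L => ((τ l : ℝ):ℂ)) a hcos
    have hz := vand_zero hL (fun l : Fin L => Complex.cos ((τ l : ℝ):ℂ)) hxinj a hpow
    have := hz l0
    rw [ha] at this
    simp only at this
    rcases mul_eq_zero.mp this with h | h
    · exact h
    · exact absurd h (Complex.exp_ne_zero _)
  refine ⟨hindep, ?_⟩
  have key : ∀ (g : ℕ) (ε : ℝ) (l : Fin L), (ε = 1 ∨ ε = -1) →
      ∃ cst : ℂ, qvec (2 * R) g (ε * τ l) = cst • qvec (2 * R) 0 (τ l) := by
    rintro g ε l (rfl | rfl)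
    · rw [one_mul]
      exact ⟨_, qvec_g (2 * R) g (τ l)⟩
    · rw [show (-1 : ℝ) * τ l = -(τ l) by ring]
      refine ⟨Complex.exp (-Complex.I * (g : ℂ) * ((-(τ l) : ℝ):ℂ))
        * Complex.exp (Complex.I * ((2 * R : ℕ) : ℂ) * ((τ l : ℝ):ℂ)), ?_⟩
      rw [qvec_g (2 * R) g (-(τ l)), qvec_neg (2 * R) (τ l), smul_smul]
  have hset : Submodule.span ℂ
      {v : Fin (2 * R + 1) → ℂ | ∃ (g : ℕ) (ε : ℝ) (l : Fin L),
        (ε = 1 ∨ ε = -1) ∧ v = qvec (2 * R) g (ε * τ l)}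
      = Submodule.span ℂ (Set.range fun l : Fin L => qvec (2 * R) 0 (τ l)) := by
    apply le_antisymm
    · rw [Submodule.span_le]
      rintro w ⟨g, ε, l, hε, rfl⟩
      obtain ⟨cst, hcst⟩ := key g ε l hε
      rw [hcst]
      exact Submodule.smul_mem _ _ (Submodule.subset_span ⟨l, rfl⟩)
    · rw [Submodule.span_le]
      rintro w ⟨l, rfl⟩
      apply Submodule.subset_span
      exact ⟨0, 1, l, Or.inl rfl, by rw [one_mul]⟩
  rw [hset, finrank_span_eq_card hindep, Fintype.card_fin]
end

section
/- (Rank bound for the combined spatial–temporal–frequency matrix C.) Fix C ∈ ℕ with C ≥ 1. Define the stacked vectors c₁[m,g] ∈ ℂ^{C(N−1)} as the concatenation of the blocks c[m,g], c[m,g+1], …, c[m,g+C−1], and c₂[m,g] ∈ ℂ^{C(N−1)} as the concatenation of the blocks c[m,g], c[m+1,g], …, c[m+C−1,g]. For each l' ∈ {−L,…,−1,1,…,L} define c¹_{l'} ∈ ℂ^{C(N−1)} as the concatenation of the blocks a(Ω_{l'})·exp(−i c τ̄_{l'}) for c = 0,…,C−1, and c²_{l'} ∈ ℂ^{C(N−1)}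 as the concatenation of the blocks a(Ω_{l'})·exp(i c f̄_{l'}) for c = 0,…,C−1. Then for every m, g ∈ ℕ, both c₁[m,g] and c₂[m,g] lie in the ℂ-linear span of the 4L vectors {c¹_{l'}, c²_{l'} : l' = ±1,…,±L}; consequently, for any C₁ ∈ ℕ, the C(N−1) × 2(C₁+1) matrix whose columns are c₁[m,m] and c₂[m,m] for m = 0,…,C₁ has rank at most 4L. -/
/-- The index set `{−L,…,−1,1,…,L}`. -/
noncomputable def idxSet (L : ℕ) : Finset ℤ := (Finset.Icc (-(L : ℤ)) (L : ℤ)).erase 0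

/-- The signal `ξ_n[m,g] = Σ_{l'=−L, l'≠0}^{L} P_{l'}·exp(i m f̄_{l'})·exp(−i g τ̄_{l'})·exp(i n Ω_{l'})`. -/
noncomputable def xiZ (L : ℕ) (Pc : ℤ → ℂ) (fb τb Ω : ℤ → ℝ) (n m g : ℕ) : ℂ :=
  ∑ l ∈ idxSet L,
    Pc l * Complex.exp (Complex.I * (m : ℂ) * (fb l : ℂ)) *
      Complex.exp (-Complex.I * (g : ℂ) * (τb l : ℂ)) *
      Complex.exp (Complex.I * (n : ℂ) * (Ω l : ℂ))

/-- The array response vector `a(Ω) ∈ ℂ^{N−1}` with `n`-th entry `exp(i n Ω)`, `n = 1,…,N−1`. -/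
noncomputable def aVec (N : ℕ) (Ω : ℝ) : Fin (N - 1) → ℂ := fun j =>
  Complex.exp (Complex.I * (((j : ℕ) + 1 : ℕ) : ℂ) * (Ω : ℂ))

/-- The spatial signal vector `c[m,g] ∈ ℂ^{N−1}` with `n`-th entry `ξ_n[m,g]`, `n = 1,…,N−1`. -/
noncomputable def cVec (N L : ℕ) (Pc : ℤ → ℂ) (fb τb Ω : ℤ → ℝ) (m g : ℕ) :
    Fin (N - 1) → ℂ := fun j => xiZ L Pc fb τb Ω ((j : ℕ) + 1) m g

/-- The weighting factor `ψ_{l'}[m,g] = P_{l'}·exp(i m f̄_{l'})·exp(−i g τ̄_{l'})`. -/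
noncomputable def ψw (Pc : ℤ → ℂ) (fb τb : ℤ → ℝ) (l : ℤ) (m g : ℕ) : ℂ :=
  Pc l * Complex.exp (Complex.I * (m : ℂ) * (fb l : ℂ)) *
    Complex.exp (-Complex.I * (g : ℂ) * (τb l : ℂ))

/-- The stacked (delay-domain) vector `c₁[m,g] ∈ ℂ^{C(N−1)}`, the concatenation of the
blocks `c[m,g], c[m,g+1], …, c[m,g+C−1]` (block index `p.1`, in-block index `p.2`). -/
noncomputable def c1Vec (N L C : ℕ) (Pc : ℤ → ℂ) (fb τb Ω : ℤ → ℝ) (m g : ℕ) :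
    Fin C × Fin (N - 1) → ℂ := fun p => cVec N L Pc fb τb Ω m (g + (p.1 : ℕ)) p.2

/-- The stacked (Doppler-domain) vector `c₂[m,g] ∈ ℂ^{C(N−1)}`, the concatenation of
the blocks `c[m,g], c[m+1,g], …, c[m+C−1,g]`. -/
noncomputable def c2Vec (N L C : ℕ) (Pc : ℤ → ℂ) (fb τb Ω : ℤ → ℝ) (m g : ℕ) :
    Fin C × Fin (N - 1) → ℂ := fun p => cVec N L Pc fb τb Ω (m + (p.1 : ℕ)) g p.2

/-- The stacked (delay-domain) basis vector `c¹_{l'} ∈ ℂ^{C(N−1)}`, the concatenation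
of the blocks `a(Ω_{l'})·exp(−i c τ̄_{l'})` for `c = 0,…,C−1`. -/
noncomputable def c1Basis (N C : ℕ) (τbl Ωl : ℝ) : Fin C × Fin (N - 1) → ℂ :=
  fun p => aVec N Ωl p.2 * Complex.exp (-Complex.I * ((p.1 : ℕ) : ℂ) * (τbl : ℂ))

/-- The stacked (Doppler-domain) basis vector `c²_{l'} ∈ ℂ^{C(N−1)}`, the concatenation
of the blocks `a(Ω_{l'})·exp(i c f̄_{l'})` for `c = 0,…,C−1`. -/
noncomputable def c2Basis (N C : ℕ) (fbl Ωl : ℝ) : Fin C × Fin (N - 1) → ℂ :=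
  fun p => aVec N Ωl p.2 * Complex.exp (Complex.I * ((p.1 : ℕ) : ℂ) * (fbl : ℂ))

/-- rank bound for the combined spatial–temporal–frequency matrix `C`:
both `c₁[m,g]` and `c₂[m,g]` lie in the span of the `4L` vectors
`{c¹_{l'}, c²_{l'} : l' = ±1,…,±L}`; consequently the `C(N−1) × 2(C₁+1)` matrix whose
columns are `c₁[m,m]` and `c₂[m,m]` for `m = 0,…,C₁` has rank at most `4L`. -/
lemma c1Vec_eq_sum (N L C : ℕ) (Pc : ℤ → ℂ) (fb τb Ω : ℤ → ℝ) (m g : ℕ) :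
    c1Vec N L C Pc fb τb Ω m g =
      ∑ l ∈ idxSet L, ψw Pc fb τb l m g • c1Basis N C (τb l) (Ω l) := by
  funext p
  simp only [c1Vec, cVec, xiZ, c1Basis, aVec, ψw, Finset.sum_apply, Pi.smul_apply,
    smul_eq_mul]
  refine Finset.sum_congr rfl fun l _ => ?_
  push_cast
  rw [show -Complex.I * ((g : ℂ) + ((p.1 : ℕ) : ℂ)) * (τb l : ℂ)
        = -Complex.I * (g : ℂ) * (τb l : ℂ) + -Complex.I * ((p.1 : ℕ) : ℂ) * (τb l : ℂ)
      from by ring, Complex.exp_add]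
  ring

lemma c2Vec_eq_sum (N L C : ℕ) (Pc : ℤ → ℂ) (fb τb Ω : ℤ → ℝ) (m g : ℕ) :
    c2Vec N L C Pc fb τb Ω m g =
      ∑ l ∈ idxSet L, ψw Pc fb τb l m g • c2Basis N C (fb l) (Ω l) := by
  funext p
  simp only [c2Vec, cVec, xiZ, c2Basis, aVec, ψw, Finset.sum_apply, Pi.smul_apply,
    smul_eq_mul]
  refine Finset.sum_congr rfl fun l _ => ?_
  push_cast
  rw [show Complex.I * ((m : ℂ) + ((p.1 : ℕ) : ℂ)) * (fb l : ℂ)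
        = Complex.I * (m : ℂ) * (fb l : ℂ) + Complex.I * ((p.1 : ℕ) : ℂ) * (fb l : ℂ)
      from by ring, Complex.exp_add]
  ring

open Matrix in
lemma rank_le_of_cols_in_span {m n : Type*} [Fintype m] [Fintype n] (A : Matrix m n ℂ)
    (T : Finset (m → ℂ)) (h : ∀ j, Aᵀ j ∈ Submodule.span ℂ (T : Set (m → ℂ))) :
    A.rank ≤ T.card := by
  rw [Matrix.rank_eq_finrank_span_cols]
  refine le_trans (Submodule.finrank_mono ?_) (finrank_span_finset_le_card T)
  rw [Submodule.span_le]
  rintro _ ⟨j, rfl⟩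
  exact h j

/-- rank bound for the combined spatial–temporal–frequency matrix `C`. -/
theorem combined_matrix_rank_le (N L C : ℕ) (hN : 2 ≤ N) (hC : 1 ≤ C)
    (Pc : ℤ → ℂ) (fb τb Ω : ℤ → ℝ) :
    (∀ m g : ℕ,
      c1Vec N L C Pc fb τb Ω m g ∈
        Submodule.span ℂ
          (((fun l : ℤ => c1Basis N C (τb l) (Ω l)) '' ↑(idxSet L)) ∪
            ((fun l : ℤ => c2Basis N C (fb l) (Ω l)) '' ↑(idxSet L))) ∧
      c2Vec N L C Pc fb τb Ω m g ∈
        Submodule.span ℂ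
          (((fun l : ℤ => c1Basis N C (τb l) (Ω l)) '' ↑(idxSet L)) ∪
            ((fun l : ℤ => c2Basis N C (fb l) (Ω l)) '' ↑(idxSet L)))) ∧
    (∀ C₁ : ℕ,
      Matrix.rank (Matrix.of fun (p : Fin C × Fin (N - 1)) (j : Fin (C₁ + 1) × Fin 2) =>
        if j.2 = 0 then c1Vec N L C Pc fb τb Ω (j.1 : ℕ) (j.1 : ℕ) p
        else c2Vec N L C Pc fb τb Ω (j.1 : ℕ) (j.1 : ℕ) p) ≤ 4 * L) := by
  classical
  set S : Set (Fin C × Fin (N - 1) → ℂ) :=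
    ((fun l : ℤ => c1Basis N C (τb l) (Ω l)) '' ↑(idxSet L)) ∪
      ((fun l : ℤ => c2Basis N C (fb l) (Ω l)) '' ↑(idxSet L)) with hS
  have hmem : ∀ m g : ℕ,
      c1Vec N L C Pc fb τb Ω m g ∈ Submodule.span ℂ S ∧
      c2Vec N L C Pc fb τb Ω m g ∈ Submodule.span ℂ S := by
    intro m g
    constructor
    · rw [c1Vec_eq_sum]
      refine Submodule.sum_smul_mem _ _ fun l hl => Submodule.subset_span ?_
      exact Or.inl ⟨l, hl, rfl⟩
    · rw [c2Vec_eq_sum]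
      refine Submodule.sum_smul_mem _ _ fun l hl => Submodule.subset_span ?_
      exact Or.inr ⟨l, hl, rfl⟩
  refine ⟨hmem, fun C₁ => ?_⟩
  set T : Finset (Fin C × Fin (N - 1) → ℂ) :=
    (idxSet L).image (fun l => c1Basis N C (τb l) (Ω l)) ∪
      (idxSet L).image (fun l => c2Basis N C (fb l) (Ω l)) with hT
  have hTS : (T : Set (Fin C × Fin (N - 1) → ℂ)) = S := by
    simp [hT, hS, Finset.coe_union, Finset.coe_image]
  refine le_trans (rank_le_of_cols_in_span _ T fun j => ?_) ?_
  · rw [hTS]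
    by_cases h : j.2 = 0
    · have he : (Matrix.of fun (p : Fin C × Fin (N - 1)) (j : Fin (C₁ + 1) × Fin 2) =>
          if j.2 = 0 then c1Vec N L C Pc fb τb Ω (j.1 : ℕ) (j.1 : ℕ) p
          else c2Vec N L C Pc fb τb Ω (j.1 : ℕ) (j.1 : ℕ) p).transpose j =
          c1Vec N L C Pc fb τb Ω (j.1 : ℕ) (j.1 : ℕ) := by
        funext p; simp [Matrix.transpose_apply, h]
      rw [he]
      exact (hmem _ _).1
    · have he : (Matrix.of fun (p : Fin C × Fin (N - 1)) (j : Fin (C₁ + 1) × Fin 2) =>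
          if j.2 = 0 then c1Vec N L C Pc fb τb Ω (j.1 : ℕ) (j.1 : ℕ) p
          else c2Vec N L C Pc fb τb Ω (j.1 : ℕ) (j.1 : ℕ) p).transpose j =
          c2Vec N L C Pc fb τb Ω (j.1 : ℕ) (j.1 : ℕ) := by
        funext p; simp [Matrix.transpose_apply, h]
      rw [he]
      exact (hmem _ _).2
  · have hcard : (idxSet L).card = 2 * L := by
      rw [idxSet, Finset.card_erase_of_mem (by simp), Int.card_Icc]
      omega
    calc T.card ≤ (idxSet L).card + (idxSet L).card :=
          le_trans (Finset.card_union_le _ _)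
            (add_le_add Finset.card_image_le Finset.card_image_le)
      _ ≤ 4 * L := by omega
end
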